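/- The lower triangular Pascal matrix L_n with entries (L_n)_{ij} = binom(i-1, j-1) is totally nonnegative. -/
import Mathlib


/-- A matrix is totally nonnegative if every minor is nonnegative. -/
def TotallyNonneg {n : ℕ} (A : Matrix (Fin n) (Fin n) ℝ) : Prop :=
  ∀ (k : ℕ) (f g : Fin k → Fin n), StrictMono f → StrictMono g →
    0 ≤ ((A.submatrix f g).det)

lemma tn_one {n : ℕ} : TotallyNonneg (1 : Matrix (Fin n) (Fin n) ℝ) := by
  intro k f g hf hg
  haveI : WellFoundedLT (Fin k) := inferInstance
  by_cases h : f = g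
  · subst h
    have h1 : (1 : Matrix (Fin n) (Fin n) ℝ).submatrix f f = (1 : Matrix (Fin k) (Fin k) ℝ) := by
      ext p q
      simp [Matrix.one_apply, hf.injective.eq_iff]
    rw [h1, Matrix.det_one]
    norm_num
  · have hr : Set.range f ≠ Set.range g := fun hr => h ((StrictMono.range_inj hf hg).mp hr)
    have hcc : ¬ Set.range f ⊆ Set.range g ∨ ¬ Set.range g ⊆ Set.range f := by
      by_contra hc
      push_neg at hc
      exact hr (le_antisymm hc.1 hc.2)
    rcases hcc with hc | hc
    · obtain ⟨x, hxf, hxg⟩ := Set.not_subset.mp hc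
      obtain ⟨p, rfl⟩ := hxf
      have h0 : ((1 : Matrix (Fin n) (Fin n) ℝ).submatrix f g).det = 0 :=
        Matrix.det_eq_zero_of_row_eq_zero p (fun q =>
          Matrix.one_apply_ne (fun hfg => hxg ⟨q, hfg.symm⟩))
      rw [h0]
    · obtain ⟨x, hxg, hxf⟩ := Set.not_subset.mp hc
      obtain ⟨q, rfl⟩ := hxg
      have h0 : ((1 : Matrix (Fin n) (Fin n) ℝ).submatrix f g).det = 0 :=
        Matrix.det_eq_zero_of_column_eq_zero q (fun p =>
          Matrix.one_apply_ne (fun hfg => hxf ⟨p, hfg⟩))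
      rw [h0]

lemma strictMono_update {k n : ℕ} {g : Fin k → Fin n} (hg : StrictMono g) (q0 : Fin k)
    (v : Fin n) (h1 : ∀ q, q < q0 → g q < v) (h2 : ∀ q, q0 < q → v < g q) :
    StrictMono (Function.update g q0 v) := by
  intro a b hab
  simp only [Function.update_apply]
  split_ifs with ha hb hb
  · exact absurd (ha.trans hb.symm) (ne_of_lt hab)
  · exact h2 b (ha ▸ hab)
  · exact h1 a (hb ▸ hab)
  · exact hg hab

lemma tn_colop {n : ℕ} {M : Matrix (Fin n) (Fin n) ℝ} (hM : TotallyNonneg M)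
    (j : ℕ) (hj : j + 1 < n) :
    TotallyNonneg (Matrix.of fun i l : Fin n =>
      M i l + if (l : ℕ) = j then M i ⟨j + 1, hj⟩ else 0) := by
  intro k f g hf hg
  by_cases hq : ∃ q, (g q : ℕ) = j
  · obtain ⟨q0, hq0⟩ := hq
    have hjn : j < n := Nat.lt_of_succ_lt hj
    have hgq0 : g q0 = ⟨j, hjn⟩ := Fin.ext hq0
    have hsub : ((Matrix.of fun i l : Fin n =>
          M i l + if (l : ℕ) = j then M i ⟨j + 1, hj⟩ else 0).submatrix f g)
        = (M.submatrix f g).updateCol q0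
            ((fun p => M (f p) (g q0)) + fun p => M (f p) ⟨j + 1, hj⟩) := by
      ext p q
      by_cases hqq : q = q0
      · subst hqq
        simp [hq0]
      · have hne : (g q : ℕ) ≠ j := by
          intro hc
          exact hqq (hg.injective (by rw [hgq0]; exact Fin.ext hc))
        simp [Matrix.updateCol_ne hqq, hne]
    have hself : ((M.submatrix f g).updateCol q0 fun p => M (f p) (g q0))
        = M.submatrix f g := Matrix.updateCol_eq_self _ _
    rw [hsub, Matrix.det_updateCol_add, hself]
    by_cases hdup : ∃ q1, g q1 = ⟨j + 1, hj⟩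
    · obtain ⟨q1, hq1⟩ := hdup
      have hv1 : (g q1 : ℕ) = j + 1 := by rw [hq1]
      have hne : q0 ≠ q1 := by
        intro h
        rw [h] at hq0
        omega
      have h0 : ((M.submatrix f g).updateCol q0 fun p => M (f p) ⟨j + 1, hj⟩).det = 0 := by
        apply Matrix.det_zero_of_column_eq hne
        intro p
        rw [Matrix.updateCol_self, Matrix.updateCol_ne (Ne.symm hne)]
        simp [hq1]
      rw [h0, add_zero]
      exact hM k f g hf hg
    · push_neg at hdup
      have hupd : ((M.submatrix f g).updateCol q0 fun p => M (f p) ⟨j + 1, hj⟩)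
          = M.submatrix f (Function.update g q0 ⟨j + 1, hj⟩) := by
        ext p q
        by_cases hqq : q = q0 <;>
          simp [hqq, Matrix.updateCol_apply, Function.update_apply]
      have hg' : StrictMono (Function.update g q0 ⟨j + 1, hj⟩) := by
        apply strictMono_update hg q0
        · intro q hlt
          have := hg hlt
          rw [hgq0] at this
          exact lt_trans this (by simp [Fin.lt_def])
        · intro q hgt
          have h1 : (⟨j, hjn⟩ : Fin n) < g q := hgq0 ▸ hg hgt
          have h2 : g q ≠ ⟨j + 1, hj⟩ := hdup q
          rw [Fin.lt_def] at h1 ⊢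
          simp only at h1 ⊢
          have : (g q : ℕ) ≠ j + 1 := fun hc => h2 (Fin.ext hc)
          omega
      rw [hupd]
      have ha := hM k f g hf hg
      have hb := hM k f _ hf hg'
      linarith
  · push_neg at hq
    have hsub : ((Matrix.of fun i l : Fin n =>
          M i l + if (l : ℕ) = j then M i ⟨j + 1, hj⟩ else 0).submatrix f g)
        = M.submatrix f g := by
      ext p q
      simp [hq q]
    rw [hsub]
    exact hM k f g hf hg

/-- intermediate entries: identity in the top-left, Pascal in the bottom-right `s` block -/
def pasc (n s i l : ℕ) : ℝ :=
  if n - s ≤ i ∧ n - s ≤ l then (Nat.choose (i - (n - s)) (l - (n - s)) : ℝ)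
  else if i = l then 1 else 0

lemma pasc_step {n : ℕ} (s : ℕ) (hs : s < n) (i l : ℕ) (hi : i < n) (hl : l < n) :
    pasc n s i l + (if n - 1 - s ≤ l ∧ l < n - 1 then pasc n s i (l + 1) else 0)
      = pasc n (s + 1) i l := by
  have hb2 : n - (s + 1) = n - 1 - s := by omega
  have hb1 : n - s = n - 1 - s + 1 := by omega
  set b := n - 1 - s with hbdef
  simp only [pasc]
  rw [hb1, hb2]
  split_ifs <;> try (exfalso; omega)
  all_goals (first
    | (norm_num; done)
    | (rw [show l - b = 0 from by omega, show l + 1 - (b + 1) = 0 from by omega,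
        Nat.choose_zero_right, Nat.choose_zero_right]; norm_num)
    | (rw [show i - b = l - b from by omega, Nat.choose_self]; norm_num)
    | (rw [Nat.choose_eq_zero_of_lt (by omega)]; norm_num)
    | (by_cases hil : i = l
       · rw [show i - (b + 1) = l - (b + 1) from by omega, show i - b = l - b from by omega,
           Nat.choose_self, Nat.choose_self]
         try norm_num
       · rw [Nat.choose_eq_zero_of_lt (by omega), Nat.choose_eq_zero_of_lt (by omega)]
         try norm_num)
    | (rw [show i - b = i - (b + 1) + 1 from by omega, show l - b = l - (b + 1) + 1 from by omega,
        show l + 1 - (b + 1) = l - (b + 1) + 1 from by omega, Nat.choose_succ_succ]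
       push_cast
       ring))

def DMat (n s : ℕ) : Matrix (Fin n) (Fin n) ℝ :=
  Matrix.of fun i l => pasc n s (i : ℕ) (l : ℕ)

def MMat (n s t : ℕ) : Matrix (Fin n) (Fin n) ℝ :=
  Matrix.of fun i l => pasc n s (i : ℕ) (l : ℕ) +
    if n - 1 - s ≤ (l : ℕ) ∧ (l : ℕ) < t then pasc n s (i : ℕ) ((l : ℕ) + 1) else 0

lemma tn_MMat {n : ℕ} (s : ℕ) (hD : TotallyNonneg (DMat n s)) :
    ∀ t, t ≤ n - 1 → TotallyNonneg (MMat n s t) := by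
  intro t
  induction t with
  | zero =>
    intro _
    have he : MMat n s 0 = DMat n s := by
      ext i l
      simp [MMat, DMat]
    rw [he]; exact hD
  | succ t ih =>
    intro ht
    by_cases hbt : t < n - 1 - s
    · have he : MMat n s (t + 1) = DMat n s := by
        ext i l
        simp only [MMat, DMat, Matrix.of_apply]
        rw [if_neg (by omega), add_zero]
      rw [he]; exact hD
    · push_neg at hbt
      have h1 : t + 1 < n := by omega
      have heq : MMat n s (t + 1) = Matrix.of fun i l : Fin n =>
          MMat n s t i l + if (l : ℕ) = t then MMat n s t i ⟨t + 1, h1⟩ else 0 := by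
        ext i l
        simp only [MMat, Matrix.of_apply]
        by_cases hlt : (l : ℕ) = t
        · rw [if_pos ⟨by omega, by omega⟩, if_pos hlt, if_neg (by omega), if_neg (by simp)]
          simp [hlt]
        · rw [if_neg hlt]
          by_cases hc : n - 1 - s ≤ (l : ℕ) ∧ (l : ℕ) < t
          · rw [if_pos ⟨hc.1, by omega⟩, if_pos hc, add_zero]
          · rw [if_neg (by omega), if_neg hc, add_zero, add_zero]
      rw [heq]
      exact tn_colop (ih (by omega)) t h1

lemma tn_DMat {n : ℕ} : ∀ s, s ≤ n → TotallyNonneg (DMat n s) := by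
  intro s
  induction s with
  | zero =>
    intro _
    have he : DMat n 0 = 1 := by
      ext i l
      have : ¬ (n - 0 ≤ (i : ℕ) ∧ n - 0 ≤ (l : ℕ)) := by
        rintro ⟨h, -⟩; omega
      simp [DMat, pasc, this, Matrix.one_apply, Fin.ext_iff]
    rw [he]; exact tn_one
  | succ s ih =>
    intro hs
    have hD := ih (by omega)
    have h := tn_MMat s hD (n - 1) le_rfl
    have he : MMat n s (n - 1) = DMat n (s + 1) := by
      ext i l
      exact pasc_step s (by omega) (i : ℕ) (l : ℕ) i.isLt l.isLt
    rwa [he] at h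

theorem lowerPascal_totallyNonneg (n : ℕ) :
    TotallyNonneg
      (Matrix.of fun i j : Fin n => (Nat.choose (i : ℕ) (j : ℕ) : ℝ)) := by
  have h := tn_DMat n le_rfl
  have he : DMat n n = Matrix.of fun i j : Fin n => (Nat.choose (i : ℕ) (j : ℕ) : ℝ) := by
    ext i l
    simp [DMat, pasc, Nat.sub_self]
  rwa [he] at h
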